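/- arXiv:1403.3210 — 4 statements merged into one kernel-verified Lean document; each statement's English description precedes it below -/
import Mathlib

section
/- Let C be a nonempty closed convex subset of a real Hilbert space H and T : C → C a nonexpansive mapping with Fix(T) ≠ ∅. Then I − T is demiclosed: if xₙ ∈ C converges weakly to x ∈ C and (I − T)xₙ converges strongly to y, then (I − T)x = y. -/
open RealInnerProductSpace Filter

theorem stmt5 {H : Type*} [NormedAddCommGroup H] [InnerProductSpace ℝ H]
    [CompleteSpace H]
    (C : Set H) (hC : C.Nonempty) (hCc : IsClosed C) (hCv : Convex ℝ C)
    (T : H → H) (hTself : ∀ x ∈ C, T x ∈ C)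
    (hT : ∀ x ∈ C, ∀ y ∈ C, ‖T x - T y‖ ≤ ‖x - y‖)
    (hFix : ∃ x ∈ C, T x = x)
    (x : ℕ → H) (hx : ∀ n, x n ∈ C) (x₀ : H) (hx₀ : x₀ ∈ C)
    (hweak : ∀ z : H, Tendsto (fun n => ⟪x n, z⟫) atTop (nhds ⟪x₀, z⟫))
    (y : H) (hy : Tendsto (fun n => x n - T (x n)) atTop (nhds y)) :
    x₀ - T x₀ = y := by
  set u : H := x₀ - T x₀ with hu
  -- Step 1: the sequence x is bounded (Banach–Steinhaus via weak convergence)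
  obtain ⟨M, hM⟩ : ∃ M : ℝ, ∀ n, ‖x n‖ ≤ M := by
    obtain ⟨M, hM⟩ := banach_steinhaus (g := fun n => innerSL ℝ (x n)) (by
      intro z
      have h := ((hweak z).norm).bddAbove_range
      obtain ⟨b, hb⟩ := h
      exact ⟨b, fun n => hb ⟨n, rfl⟩⟩)
    refine ⟨M, fun n => ?_⟩
    have := hM n
    simpa using this
  -- Step 2: key inequality from nonexpansiveness
  have key : ∀ n, ‖u - (x n - T (x n))‖ ^ 2 ≤
      2 * ⟪x n - x₀, (x n - T (x n)) - u⟫ := by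
    intro n
    have h1 : ‖(x n - x₀) - ((x n - T (x n)) - u)‖ ≤ ‖x n - x₀‖ := by
      have h := hT (x n) (hx n) x₀ hx₀
      have e : T (x n) - T x₀ = (x n - x₀) - ((x n - T (x n)) - u) := by
        rw [hu]; abel
      rwa [e] at h
    have h2 : ‖(x n - x₀) - ((x n - T (x n)) - u)‖ ^ 2 ≤ ‖x n - x₀‖ ^ 2 := by
      have := norm_nonneg ((x n - x₀) - ((x n - T (x n)) - u))
      nlinarith
    have h3 := @norm_sub_sq_real H _ _ (x n - x₀) ((x n - T (x n)) - u)
    have h4 : ‖u - (x n - T (x n))‖ = ‖(x n - T (x n)) - u‖ := norm_sub_rev _ _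
    rw [h4]
    nlinarith
  -- Step 3: bound the right-hand side by a sequence tending to 0
  set g : ℕ → ℝ := fun n =>
    2 * (M + ‖x₀‖) * ‖(x n - T (x n)) - y‖ +
      2 * (⟪x n, y - u⟫ - ⟪x₀, y - u⟫) with hg
  have hbound : ∀ n, 2 * ⟪x n - x₀, (x n - T (x n)) - u⟫ ≤ g n := by
    intro n
    have e1 : (x n - T (x n)) - u = ((x n - T (x n)) - y) + (y - u) := by abel
    have e2 : ⟪x n - x₀, (x n - T (x n)) - u⟫ =
        ⟪x n - x₀, (x n - T (x n)) - y⟫ + ⟪x n - x₀, y - u⟫ := by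
      rw [e1, inner_add_right]
    have h5 : ⟪x n - x₀, (x n - T (x n)) - y⟫ ≤
        (M + ‖x₀‖) * ‖(x n - T (x n)) - y‖ := by
      calc ⟪x n - x₀, (x n - T (x n)) - y⟫
          ≤ ‖x n - x₀‖ * ‖(x n - T (x n)) - y‖ := real_inner_le_norm _ _
        _ ≤ (M + ‖x₀‖) * ‖(x n - T (x n)) - y‖ := by
            apply mul_le_mul_of_nonneg_right _ (norm_nonneg _)
            calc ‖x n - x₀‖ ≤ ‖x n‖ + ‖x₀‖ := norm_sub_le _ _
              _ ≤ M + ‖x₀‖ := by linarith [hM n]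
    have h6 : ⟪x n - x₀, y - u⟫ = ⟪x n, y - u⟫ - ⟪x₀, y - u⟫ :=
      inner_sub_left _ _ _
    rw [hg]
    simp only []
    rw [e2, h6]
    nlinarith
  -- g tends to 0
  have hg0 : Tendsto g atTop (nhds 0) := by
    have t1 : Tendsto (fun n => ‖(x n - T (x n)) - y‖) atTop (nhds 0) := by
      have := (hy.sub_const y).norm
      simpa using this
    have t2 : Tendsto (fun n => ⟪x n, y - u⟫ - ⟪x₀, y - u⟫) atTop (nhds 0) := by
      have := (hweak (y - u)).sub_const ⟪x₀, y - u⟫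
      simpa using this
    have := ((t1.const_mul (2 * (M + ‖x₀‖))).add (t2.const_mul 2))
    simpa [hg, mul_comm, mul_assoc] using this
  -- LHS tends to ‖u - y‖²
  have hlhs : Tendsto (fun n => ‖u - (x n - T (x n))‖ ^ 2) atTop
      (nhds (‖u - y‖ ^ 2)) := by
    exact ((tendsto_const_nhds.sub hy).norm.pow 2)
  have hfin : ‖u - y‖ ^ 2 ≤ 0 :=
    le_of_tendsto_of_tendsto' hlhs hg0 (fun n => (key n).trans (hbound n))
  have : ‖u - y‖ = 0 := by nlinarith [norm_nonneg (u - y)]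
  have := norm_eq_zero.mp this
  exact sub_eq_zero.mp this
end

section
/- Let C be a nonempty closed bounded subset of a Banach space X and {Tₙ} a sequence of nearly nonexpansive self-mappings of C with respect to a sequence {aₙ} ⊆ [0,∞) with aₙ → 0, such that ∑ₙ sup_{x∈C} ‖Tₙx − T_{n+1}x‖ < ∞ (equivalently, the deviations D_C(Tₙ, T_{n+1}) are summable). Then for each x ∈ C, {Tₙx} converges strongly to some point of C; moreover the map T defined by Tz = lim Tₙz is nonexpansive and sup_{x∈C} ‖Tₙx − Tx‖ → 0. -/
open Filter

theorem stmt6 {X : Type*} [NormedAddCommGroup X] [NormedSpace ℝ X] [CompleteSpace X]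
    (C : Set X) (hC : C.Nonempty) (hCc : IsClosed C) (hCb : Bornology.IsBounded C)
    (T : ℕ → X → X) (hTself : ∀ n, ∀ x ∈ C, T n x ∈ C)
    (a : ℕ → ℝ) (ha : ∀ n, 0 ≤ a n) (ha0 : Tendsto a atTop (nhds 0))
    (hT : ∀ n, ∀ x ∈ C, ∀ y ∈ C, ‖T n x - T n y‖ ≤ ‖x - y‖ + a n)
    (hsum : Summable (fun n => ⨆ x : C, ‖T n x - T (n + 1) x‖)) :
    (∀ x ∈ C, ∃ l ∈ C, Tendsto (fun n => T n x) atTop (nhds l)) ∧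
      ∀ S : X → X, (∀ z ∈ C, Tendsto (fun n => T n z) atTop (nhds (S z))) →
        (∀ x ∈ C, ∀ y ∈ C, ‖S x - S y‖ ≤ ‖x - y‖) ∧
          Tendsto (fun n => ⨆ x : C, ‖T n x - S x‖) atTop (nhds 0) := by
  haveI : Nonempty C := hC.to_subtype
  obtain ⟨R, hR⟩ := hCb.exists_norm_le
  set f : ℕ → ℝ := fun n => ⨆ x : C, ‖T n x - T (n + 1) x‖ with hf
  have hbdd : ∀ n, BddAbove (Set.range fun x : C => ‖T n x - T (n + 1) x‖) := by
    intro n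
    refine ⟨2 * R, ?_⟩
    rintro _ ⟨x, rfl⟩
    calc ‖T n x - T (n + 1) x‖ ≤ ‖T n (x : X)‖ + ‖T (n + 1) (x : X)‖ := norm_sub_le _ _
      _ ≤ R + R := add_le_add (hR _ (hTself n x x.2)) (hR _ (hTself (n + 1) x x.2))
      _ = 2 * R := by ring
  have hle : ∀ n, ∀ x ∈ C, ‖T n x - T (n + 1) x‖ ≤ f n := by
    intro n x hx
    exact le_ciSup (hbdd n) ⟨x, hx⟩
  have hdist : ∀ x ∈ C, ∀ n, dist (T n x) (T (n + 1) x) ≤ f n := by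
    intro x hx n
    rw [dist_eq_norm]
    exact hle n x hx
  have hconv : ∀ x ∈ C, ∃ l ∈ C, Tendsto (fun n => T n x) atTop (nhds l) := by
    intro x hx
    have hcs : CauchySeq fun n => T n x :=
      cauchySeq_of_dist_le_of_summable f (hdist x hx) hsum
    obtain ⟨l, hl⟩ := cauchySeq_tendsto_of_complete hcs
    exact ⟨l, hCc.mem_of_tendsto hl (Eventually.of_forall fun n => hTself n x hx), hl⟩
  refine ⟨hconv, fun S hS => ⟨?_, ?_⟩⟩
  · intro x hx y hy
    have h1 : Tendsto (fun n => ‖T n x - T n y‖) atTop (nhds ‖S x - S y‖) :=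
      ((hS x hx).sub (hS y hy)).norm
    have h2 : Tendsto (fun n => ‖x - y‖ + a n) atTop (nhds (‖x - y‖ + 0)) :=
      tendsto_const_nhds.add ha0
    rw [add_zero] at h2
    exact le_of_tendsto_of_tendsto' h1 h2 fun n => hT n x hx y hy
  · have htail : ∀ n, ∀ x ∈ C, ‖T n x - S x‖ ≤ ∑' m, f (n + m) := by
      intro n x hx
      rw [← dist_eq_norm]
      exact dist_le_tsum_of_dist_le_of_tendsto f (hdist x hx) hsum (hS x hx) n
    have htail0 : Tendsto (fun n => ∑' m, f (n + m)) atTop (nhds 0) := by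
      have := tendsto_sum_nat_add f
      simpa [add_comm] using this
    refine squeeze_zero (fun n => Real.iSup_nonneg fun x => norm_nonneg _) (fun n => ?_) htail0
    exact ciSup_le fun x => htail n x x.2
end

section
/- Let λ₁, …, λ_N > 0 with ∑ λᵢ = 1 and T₁, …, T_N nonexpansive self-mappings of a nonempty closed convex subset C of a real Hilbert space with ⋂ᵢ Fix(Tᵢ) ≠ ∅. Then the convex combination T = ∑ λᵢTᵢ is a nonexpansive self-mapping of C and Fix(T) = ⋂ᵢ Fix(Tᵢ). -/
open Finset RealInnerProductSpace

theorem stmt8 {H : Type*} [NormedAddCommGroup H] [InnerProductSpace ℝ H]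
    (C : Set H) (hC : C.Nonempty) (hCc : IsClosed C) (hCv : Convex ℝ C)
    (N : ℕ) (hN : 0 < N) (lam : Fin N → ℝ) (hlam : ∀ i, 0 < lam i)
    (hlamsum : ∑ i, lam i = 1)
    (T : Fin N → H → H) (hTself : ∀ i, ∀ x ∈ C, T i x ∈ C)
    (hT : ∀ i, ∀ x ∈ C, ∀ y ∈ C, ‖T i x - T i y‖ ≤ ‖x - y‖)
    (hFix : ∃ x ∈ C, ∀ i, T i x = x) :
    (∀ x ∈ C, (∑ i, lam i • T i x) ∈ C) ∧
      (∀ x ∈ C, ∀ y ∈ C, ‖(∑ i, lam i • T i x) - ∑ i, lam i • T i y‖ ≤ ‖x - y‖) ∧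
      ∀ x ∈ C, ((∑ i, lam i • T i x) = x ↔ ∀ i, T i x = x) := by
  refine ⟨?_, ?_, ?_⟩
  · intro x hx
    exact hCv.sum_mem (fun i _ => (hlam i).le) hlamsum (fun i _ => hTself i x hx)
  · intro x hx y hy
    calc ‖(∑ i, lam i • T i x) - ∑ i, lam i • T i y‖
        = ‖∑ i, lam i • (T i x - T i y)‖ := by
          rw [← Finset.sum_sub_distrib]; simp [smul_sub]
      _ ≤ ∑ i, ‖lam i • (T i x - T i y)‖ := norm_sum_le _ _
      _ ≤ ∑ i, lam i * ‖x - y‖ := by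
          apply Finset.sum_le_sum
          intro i _
          rw [norm_smul, Real.norm_eq_abs, abs_of_pos (hlam i)]
          exact mul_le_mul_of_nonneg_left (hT i x hx y hy) (hlam i).le
      _ = ‖x - y‖ := by rw [← Finset.sum_mul, hlamsum, one_mul]
  · intro x hx
    constructor
    · intro hsum i
      obtain ⟨p, hpC, hp⟩ := hFix
      have hkey : ∑ i, lam i • (T i x - p) = x - p := by
        have : x - p = (∑ i, lam i • T i x) - (∑ i, lam i • p) := by
          rw [hsum, ← Finset.sum_smul, hlamsum, one_smul]
        rw [this, ← Finset.sum_sub_distrib]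
        simp [smul_sub]
      have hnb : ∀ j, ‖T j x - p‖ ≤ ‖x - p‖ := by
        intro j
        have := hT j x hx p hpC
        rwa [hp j] at this
      have hb : ∀ j, ⟪T j x - p, x - p⟫ ≤ ‖x - p‖ ^ 2 := by
        intro j
        calc ⟪T j x - p, x - p⟫ ≤ ‖T j x - p‖ * ‖x - p‖ := real_inner_le_norm _ _
          _ ≤ ‖x - p‖ * ‖x - p‖ :=
              mul_le_mul_of_nonneg_right (hnb j) (norm_nonneg _)
          _ = ‖x - p‖ ^ 2 := (sq _).symm
      have hsumeq : ∑ j, lam j * ⟪T j x - p, x - p⟫ = ‖x - p‖ ^ 2 := by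
        rw [← real_inner_self_eq_norm_sq, ← hkey, sum_inner]
        simp [real_inner_smul_left]
      have heach : ⟪T i x - p, x - p⟫ = ‖x - p‖ ^ 2 := by
        by_contra h
        have hlt : lam i * ⟪T i x - p, x - p⟫ < lam i * ‖x - p‖ ^ 2 :=
          mul_lt_mul_of_pos_left (lt_of_le_of_ne (hb i) h) (hlam i)
        have hsl : ∑ j, lam j * ⟪T j x - p, x - p⟫ < ∑ j, lam j * ‖x - p‖ ^ 2 :=
          Finset.sum_lt_sum (fun j _ => mul_le_mul_of_nonneg_left (hb j) (hlam j).le)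
            ⟨i, Finset.mem_univ i, hlt⟩
        rw [hsumeq, ← Finset.sum_mul, hlamsum, one_mul] at hsl
        exact lt_irrefl _ hsl
      have hz : ‖T i x - x‖ ^ 2 ≤ 0 := by
        have hexp : T i x - x = (T i x - p) - (x - p) := by abel
        rw [hexp, norm_sub_sq_real, heach]
        have h2 : ‖T i x - p‖ ^ 2 ≤ ‖x - p‖ ^ 2 :=
          pow_le_pow_left₀ (norm_nonneg _) (hnb i) 2
        nlinarith
      have : ‖T i x - x‖ = 0 := by nlinarith [norm_nonneg (T i x - x)]
      have := norm_sub_eq_zero_iff.mp this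
      exact this
    · intro h
      rw [Finset.sum_congr rfl (fun i _ => by rw [h i]), ← Finset.sum_smul, hlamsum, one_smul]
end

section
/- Let C be a nonempty closed convex subset of a real Hilbert space H and T : C → C nonexpansive with Fix(T) ≠ ∅. If {xₙ} ⊆ C is bounded and ‖xₙ − Txₙ‖ → 0, then for any z ∈ H, limsup_n ⟨z, xₙ − x*⟩ = ⟨z, x̃ − x*⟩ for some weak cluster point x̃ of {xₙ} which belongs to Fix(T); in particular, if x* ∈ Fix(T) satisfies ⟨z, x − x*⟩ ≤ 0 for all x ∈ Fix(T), then limsup_n ⟨z, xₙ − x*⟩ ≤ 0. -/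
open RealInnerProductSpace Filter

/-- Weak sequential compactness of bounded sequences in a real Hilbert space. -/
lemma weak_seq_compact {H : Type*} [NormedAddCommGroup H] [InnerProductSpace ℝ H]
    [CompleteSpace H] (x : ℕ → H) (M : ℝ) (hM : ∀ n, ‖x n‖ ≤ M) :
    ∃ (xt : H) (φ : ℕ → ℕ), StrictMono φ ∧
      ∀ w : H, Tendsto (fun k => ⟪x (φ k), w⟫) atTop (nhds ⟪xt, w⟫) := by
  have hM0 : 0 ≤ M := le_trans (norm_nonneg _) (hM 0)
  set K : Submodule ℝ H := (Submodule.span ℝ (Set.range x)).topologicalClosure with hK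
  have hxK : ∀ n, x n ∈ K :=
    fun n => Submodule.le_topologicalClosure _ (Submodule.subset_span ⟨n, rfl⟩)
  -- a countable dense family in K
  have hsep : TopologicalSpace.IsSeparable (K : Set H) := by
    have h1 : TopologicalSpace.IsSeparable (Set.range x) :=
      (Set.countable_range x).isSeparable
    have h2 := h1.span (R := ℝ)
    simpa [hK, Submodule.topologicalClosure_coe] using h2.closure
  obtain ⟨c, hcc, hcd⟩ := hsep
  obtain ⟨D, hD⟩ := (Set.Countable.insert 0 hcc).exists_eq_range (Set.insert_nonempty _ _)
  have hcd' : (K : Set H) ⊆ closure (Set.range D) := by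
    rw [← hD]
    exact hcd.trans (closure_mono (Set.subset_insert _ _))
  -- extract a subsequence converging against each D m, via compactness of a product
  set s : Set (ℕ → ℝ) := Set.pi Set.univ (fun m => Set.Icc (-(M * ‖D m‖)) (M * ‖D m‖)) with hs
  have hsc : IsCompact s := isCompact_univ_pi fun m => isCompact_Icc
  have hmem : ∀ n, (fun m => ⟪x n, D m⟫) ∈ s := by
    intro n m _
    have h1 : |⟪x n, D m⟫| ≤ ‖x n‖ * ‖D m‖ := abs_real_inner_le_norm _ _
    have h2 : ‖x n‖ * ‖D m‖ ≤ M * ‖D m‖ :=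
      mul_le_mul_of_nonneg_right (hM n) (norm_nonneg _)
    constructor
    · linarith [abs_le.mp (h1.trans h2)|>.1]
    · exact (le_abs_self _).trans (h1.trans h2)
  obtain ⟨ℓ, -, φ, hφ, hℓ⟩ := hsc.tendsto_subseq hmem
  have hconvD : ∀ m, ∃ l, Tendsto (fun k => ⟪x (φ k), D m⟫) atTop (nhds l) := by
    intro m
    exact ⟨ℓ m, (tendsto_pi_nhds.1 hℓ m)⟩
  -- convergence against every w
  haveI : CompleteSpace K := (Submodule.isClosed_topologicalClosure _).completeSpace_coe
  have hconv : ∀ w : H, ∃ l, Tendsto (fun k => ⟪x (φ k), w⟫) atTop (nhds l) := by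
    intro w
    set p : H := (K.orthogonalProjectionOnto w : H) with hp
    have hxw : ∀ n, ⟪x n, w⟫ = ⟪x n, p⟫ := by
      intro n
      have horth : w - p ∈ Kᗮ := K.sub_starProjection_mem_orthogonal w
      have h0 : ⟪x n, w - p⟫ = 0 := horth (x n) (hxK n)
      have := inner_sub_right (𝕜 := ℝ) (x n) w p
      rw [h0] at this
      linarith
    have hcau : CauchySeq (fun k => ⟪x (φ k), p⟫) := by
      rw [Metric.cauchySeq_iff]
      intro ε hε
      have hpK : p ∈ closure (Set.range D) :=
        hcd' (K.orthogonalProjectionOnto w).2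
      obtain ⟨q, ⟨m, rfl⟩, hq⟩ := Metric.mem_closure_iff.1 hpK (ε / (3 * (M + 1)))
        (by positivity)
      obtain ⟨l, hl⟩ := hconvD m
      have hcl : CauchySeq (fun k => ⟪x (φ k), D m⟫) := hl.cauchySeq
      rw [Metric.cauchySeq_iff] at hcl
      obtain ⟨N, hN⟩ := hcl (ε / 3) (by positivity)
      refine ⟨N, fun j hj k hk => ?_⟩
      have h1 : dist (⟪x (φ j), D m⟫ : ℝ) ⟪x (φ k), D m⟫ < ε / 3 := hN j hj k hk
      have key : ∀ i, |⟪x (φ i), p⟫ - ⟪x (φ i), D m⟫| ≤ M * (ε / (3 * (M + 1))) := by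
        intro i
        have : ⟪x (φ i), p⟫ - ⟪x (φ i), D m⟫ = ⟪x (φ i), p - D m⟫ := by
          rw [inner_sub_right]
        rw [this]
        calc |⟪x (φ i), p - D m⟫| ≤ ‖x (φ i)‖ * ‖p - D m‖ := abs_real_inner_le_norm _ _
          _ ≤ M * (ε / (3 * (M + 1))) := by
              apply mul_le_mul (hM _) ?_ (norm_nonneg _) hM0
              rw [← dist_eq_norm]
              exact le_of_lt hq
      have hMe : M * (ε / (3 * (M + 1))) ≤ ε / 3 := by
        have h2 : (M+1) * (ε / (3 * (M + 1))) = ε / 3 := by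
          field_simp
        nlinarith [mul_le_mul_of_nonneg_right (by linarith : M ≤ M + 1)
          (by positivity : (0:ℝ) ≤ ε / (3 * (M + 1)))]
      have hj' := key j
      have hk' := key k
      rw [Real.dist_eq] at h1 ⊢
      have htri1 := abs_sub_le (⟪x (φ j), p⟫ : ℝ) ⟪x (φ j), D m⟫ ⟪x (φ k), p⟫
      have htri2 := abs_sub_le (⟪x (φ j), D m⟫ : ℝ) ⟪x (φ k), D m⟫ ⟪x (φ k), p⟫
      have habs : |(⟪x (φ k), D m⟫ : ℝ) - ⟪x (φ k), p⟫| = |⟪x (φ k), p⟫ - ⟪x (φ k), D m⟫| :=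
        abs_sub_comm _ _
      linarith
    obtain ⟨l, hl⟩ := cauchySeq_tendsto_of_complete hcau
    refine ⟨l, ?_⟩
    simpa only [hxw] using hl
  choose f hf using hconv
  -- f is a bounded linear functional
  have hadd : ∀ w₁ w₂, f (w₁ + w₂) = f w₁ + f w₂ := by
    intro w₁ w₂
    have h1 : Tendsto (fun k => ⟪x (φ k), w₁ + w₂⟫) atTop (nhds (f w₁ + f w₂)) := by
      have := (hf w₁).add (hf w₂)
      simpa [inner_add_right] using this
    exact tendsto_nhds_unique (hf _) h1
  have hsmul : ∀ (r : ℝ) w, f (r • w) = r * f w := by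
    intro r w
    have h1 : Tendsto (fun k => ⟪x (φ k), r • w⟫) atTop (nhds (r * f w)) := by
      have := (hf w).const_mul r
      simpa [inner_smul_right] using this
    exact tendsto_nhds_unique (hf _) h1
  have hbound : ∀ w, |f w| ≤ M * ‖w‖ := by
    intro w
    have := (hf w).abs
    apply le_of_tendsto this
    filter_upwards with k
    exact (abs_real_inner_le_norm _ _).trans
      (mul_le_mul_of_nonneg_right (hM _) (norm_nonneg _))
  let F : H →L[ℝ] ℝ := LinearMap.mkContinuous
    { toFun := f, map_add' := hadd, map_smul' := hsmul } M
    (fun w => by simpa using hbound w)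
  refine ⟨(InnerProductSpace.toDual ℝ H).symm F, φ, hφ, fun w => ?_⟩
  have : ⟪(InnerProductSpace.toDual ℝ H).symm F, w⟫ = F w :=
    InnerProductSpace.toDual_symm_apply
  rw [this]
  exact hf w

theorem stmt15 {H : Type*} [NormedAddCommGroup H] [InnerProductSpace ℝ H]
    [CompleteSpace H]
    (C : Set H) (hC : C.Nonempty) (hCc : IsClosed C) (hCv : Convex ℝ C)
    (T : H → H) (hTself : ∀ x ∈ C, T x ∈ C)
    (hT : ∀ x ∈ C, ∀ y ∈ C, ‖T x - T y‖ ≤ ‖x - y‖)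
    (hFix : ∃ x ∈ C, T x = x)
    (x : ℕ → H) (hx : ∀ n, x n ∈ C) (hxb : Bornology.IsBounded (Set.range x))
    (hxT : Tendsto (fun n => ‖x n - T (x n)‖) atTop (nhds 0))
    (z : H) (xs : H) (hxs : xs ∈ C ∧ T xs = xs) :
    (∃ xt : H, (xt ∈ C ∧ T xt = xt) ∧
      (∃ φ : ℕ → ℕ, StrictMono φ ∧
        ∀ w : H, Tendsto (fun k => ⟪x (φ k), w⟫) atTop (nhds ⟪xt, w⟫)) ∧
      limsup (fun n => ⟪z, x n - xs⟫) atTop = ⟪z, xt - xs⟫) ∧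
    ((∀ w, (w ∈ C ∧ T w = w) → ⟪z, w - xs⟫ ≤ 0) →
      limsup (fun n => ⟪z, x n - xs⟫) atTop ≤ 0) := by
  obtain ⟨M, hM⟩ := hxb.exists_norm_le
  have hMn : ∀ n, ‖x n‖ ≤ M := fun n => hM _ ⟨n, rfl⟩
  have hM0 : 0 ≤ M := le_trans (norm_nonneg _) (hMn 0)
  set a : ℕ → ℝ := fun n => ⟪z, x n - xs⟫ with ha
  have habd : ∀ n, |a n| ≤ ‖z‖ * (M + ‖xs‖) := by
    intro n
    calc |a n| ≤ ‖z‖ * ‖x n - xs‖ := abs_real_inner_le_norm _ _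
      _ ≤ ‖z‖ * (M + ‖xs‖) := by
          apply mul_le_mul_of_nonneg_left ?_ (norm_nonneg z)
          calc ‖x n - xs‖ ≤ ‖x n‖ + ‖xs‖ := norm_sub_le _ _
            _ ≤ M + ‖xs‖ := by linarith [hMn n]
  have hbddle : IsBoundedUnder (· ≤ ·) atTop a :=
    isBoundedUnder_of ⟨‖z‖ * (M + ‖xs‖), fun n => (le_abs_self _).trans (habd n)⟩
  have hbddge : IsBoundedUnder (· ≥ ·) atTop a :=
    isBoundedUnder_of ⟨-(‖z‖ * (M + ‖xs‖)), fun n => neg_le_of_abs_le (habd n)⟩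
  set L : ℝ := limsup a atTop with hL
  -- L is a cluster point of a
  have hclus : MapClusterPt L atTop a := by
    rw [mapClusterPt_iff_frequently]
    intro s hs
    obtain ⟨ε, hε, hball⟩ := Metric.mem_nhds_iff.1 hs
    have h1 : ∃ᶠ n in atTop, L - ε < a n :=
      frequently_lt_of_lt_limsup hbddge.isCoboundedUnder_le (by linarith)
    have h2 : ∀ᶠ n in atTop, a n < L + ε :=
      eventually_lt_of_limsup_lt (by linarith) hbddle
    refine (h1.and_eventually h2).mono fun n ⟨hn1, hn2⟩ => ?_
    apply hball
    rw [Metric.mem_ball, Real.dist_eq, abs_lt]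
    constructor <;> linarith
  obtain ⟨φ₁, hφ₁, hφ₁L⟩ := TopologicalSpace.FirstCountableTopology.tendsto_subseq hclus
  obtain ⟨xt, φ₂, hφ₂, hweak⟩ := weak_seq_compact (x ∘ φ₁) M (fun n => hMn _)
  set φ : ℕ → ℕ := φ₁ ∘ φ₂ with hφdef
  have hφ : StrictMono φ := hφ₁.comp hφ₂
  have hweak' : ∀ w : H, Tendsto (fun k => ⟪x (φ k), w⟫) atTop (nhds ⟪xt, w⟫) := hweak
  -- xt ∈ C
  have hxtC : xt ∈ C := by
    by_contra hxtC
    obtain ⟨f, u, hfu, huf⟩ := geometric_hahn_banach_closed_point hCv hCc hxtC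
    set w0 : H := (InnerProductSpace.toDual ℝ H).symm f with hw0
    have hfeq : ∀ v : H, f v = ⟪v, w0⟫ := by
      intro v
      rw [real_inner_comm, InnerProductSpace.toDual_symm_apply]
    have htf : Tendsto (fun k => f (x (φ k))) atTop (nhds (f xt)) := by
      simp only [hfeq]
      exact hweak' w0
    have : f xt ≤ u := le_of_tendsto htf
      (Eventually.of_forall fun k => le_of_lt (hfu _ (hx _)))
    linarith
  -- T xt = xt (demiclosedness)
  have hTxt : T xt = xt := by
    set u : H := T xt - xt with hu
    set ε : ℕ → ℝ := fun n => ‖x n - T (x n)‖ with hε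
    have hεnn : ∀ n, 0 ≤ ε n := fun n => norm_nonneg _
    have hptwise : ∀ n, ‖u‖ ^ 2 + 2 * ⟪u, xt - x n⟫ ≤
        ε n * (2 * (‖xt‖ + M) + ε n) := by
      intro n
      have h1 : ‖T xt - x n‖ ≤ ‖xt - x n‖ + ε n := by
        have h2 : ‖T xt - T (x n)‖ ≤ ‖xt - x n‖ := hT xt hxtC (x n) (hx n)
        have h3 : ‖T (x n) - x n‖ = ε n := norm_sub_rev _ _
        calc ‖T xt - x n‖ = ‖(T xt - T (x n)) + (T (x n) - x n)‖ := by abel_nf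
          _ ≤ ‖T xt - T (x n)‖ + ‖T (x n) - x n‖ := norm_add_le _ _
          _ ≤ ‖xt - x n‖ + ε n := by rw [h3]; linarith
      have h4 : ‖T xt - x n‖ ^ 2 = ‖u‖ ^ 2 + 2 * ⟪u, xt - x n⟫ + ‖xt - x n‖ ^ 2 := by
        have : T xt - x n = u + (xt - x n) := by rw [hu]; abel
        rw [this, norm_add_sq_real]
      have h5 : ‖T xt - x n‖ ^ 2 ≤ (‖xt - x n‖ + ε n) ^ 2 :=
        pow_le_pow_left₀ (norm_nonneg _) h1 2
      have h6 : ‖xt - x n‖ ≤ ‖xt‖ + M := by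
        calc ‖xt - x n‖ ≤ ‖xt‖ + ‖x n‖ := norm_sub_le _ _
          _ ≤ ‖xt‖ + M := by linarith [hMn n]
      nlinarith [hεnn n, norm_nonneg (xt - x n)]
    have hεφ : Tendsto (fun k => ε (φ k)) atTop (nhds 0) :=
      hxT.comp (hφ.tendsto_atTop)
    have hrhs : Tendsto (fun k => ε (φ k) * (2 * (‖xt‖ + M) + ε (φ k))) atTop
        (nhds 0) := by
      have := hεφ.mul ((tendsto_const_nhds (x := 2 * (‖xt‖ + M))).add hεφ)
      simpa using this
    have hlhs : Tendsto (fun k => ‖u‖ ^ 2 + 2 * ⟪u, xt - x (φ k)⟫) atTop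
        (nhds (‖u‖ ^ 2)) := by
      have h7 : ∀ k, ⟪u, xt - x (φ k)⟫ = ⟪u, xt⟫ - ⟪x (φ k), u⟫ := by
        intro k
        rw [inner_sub_right, real_inner_comm (x (φ k)) u]
      have h8 : Tendsto (fun k => (⟪u, xt⟫ : ℝ) - ⟪x (φ k), u⟫) atTop
          (nhds (⟪u, xt⟫ - ⟪xt, u⟫)) := tendsto_const_nhds.sub (hweak' u)
      have h9 : (⟪u, xt⟫ : ℝ) - ⟪xt, u⟫ = 0 := by rw [real_inner_comm]; ring
      rw [h9] at h8
      have := (tendsto_const_nhds (x := ‖u‖ ^ 2)).add (h8.const_mul 2)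
      simp only [h7]
      simpa using this
    have hfin : ‖u‖ ^ 2 ≤ 0 :=
      le_of_tendsto_of_tendsto' hlhs hrhs fun k => hptwise (φ k)
    have : u = 0 := by
      have : ‖u‖ = 0 := by nlinarith [norm_nonneg u]
      exact norm_eq_zero.1 this
    rw [hu, sub_eq_zero] at this
    exact this
  -- limsup identification
  have hlim : L = ⟪z, xt - xs⟫ := by
    have h1 : Tendsto (fun k => a (φ k)) atTop (nhds L) :=
      hφ₁L.comp hφ₂.tendsto_atTop
    have h2 : Tendsto (fun k => a (φ k)) atTop (nhds ⟪z, xt - xs⟫) := by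
      have h3 : ∀ k, a (φ k) = ⟪x (φ k), z⟫ - ⟪z, xs⟫ := by
        intro k
        rw [ha]
        simp only [inner_sub_right, real_inner_comm (x (φ k)) z]
      have h4 : Tendsto (fun k => (⟪x (φ k), z⟫ : ℝ) - ⟪z, xs⟫) atTop
          (nhds (⟪xt, z⟫ - ⟪z, xs⟫)) := (hweak' z).sub tendsto_const_nhds
      have h5 : (⟪xt, z⟫ : ℝ) - ⟪z, xs⟫ = ⟪z, xt - xs⟫ := by
        rw [inner_sub_right, real_inner_comm xt z]
      rw [h5] at h4
      simpa only [h3] using h4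
    exact tendsto_nhds_unique h1 h2
  refine ⟨⟨xt, ⟨hxtC, hTxt⟩, ⟨φ, hφ, hweak'⟩, hlim.symm ▸ rfl⟩, fun h => ?_⟩
  calc limsup (fun n => (⟪z, x n - xs⟫ : ℝ)) atTop = L := rfl
    _ = ⟪z, xt - xs⟫ := hlim
    _ ≤ 0 := h xt ⟨hxtC, hTxt⟩
end
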